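/- For sequences of constants x, y from {⊤,⊥} and sequences of classical formulas a, b, the inclusion atom xy ⊆ ab is semantically equivalent to x ⊆ a ∧ ((y ⊆ b ∧ a^x) ∨ ¬a^x). -/
import Mathlib


structure KModel (W : Type) where
  R : W → W → Prop
  V : ℕ → Set W

inductive MF : Type
  | prop : ℕ → MF
  | bot : MF
  | neg : MF → MF
  | or : MF → MF → MF
  | and : MF → MF → MF
  | dia : MF → MF
  | box : MF → MF

def MF.top : MF := MF.neg MF.bot

def wSat {W : Type} (M : KModel W) : W → MF → Prop
  | w, .prop p => w ∈ M.V p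
  | _, .bot => False
  | w, .neg a => ¬ wSat M w a
  | w, .or a b => wSat M w a ∨ wSat M w b
  | w, .and a b => wSat M w a ∧ wSat M w b
  | w, .dia a => ∃ v, M.R w v ∧ wSat M v a
  | w, .box a => ∀ v, M.R w v → wSat M v a

inductive IncForm : Type
  | prop : ℕ → IncForm
  | bot : IncForm
  | incl : List MF → List MF → IncForm
  | neg : MF → IncForm
  | or : IncForm → IncForm → IncForm
  | and : IncForm → IncForm → IncForm
  | dia : IncForm → IncForm
  | box : IncForm → IncForm

/-- image R[T] -/
def img {W : Type} (M : KModel W) (T : Set W) : Set W := {v | ∃ w ∈ T, M.R w v}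

/-- successor team relation: S ⊆ R[T] and T ⊆ R⁻¹[S] -/
def succTeam {W : Type} (M : KModel W) (T S : Set W) : Prop :=
  (∀ v ∈ S, ∃ w ∈ T, M.R w v) ∧ (∀ w ∈ T, ∃ v ∈ S, M.R w v)

def TSat {W : Type} (M : KModel W) : Set W → IncForm → Prop
  | T, .prop p => T ⊆ M.V p
  | T, .bot => T = ∅
  | T, .incl as bs => ∀ w ∈ T, ∃ v ∈ T, ∀ i, ∀ (h1 : i < as.length) (h2 : i < bs.length),
      (wSat M w (as.get ⟨i, h1⟩) ↔ wSat M v (bs.get ⟨i, h2⟩))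
  | T, .neg a => ∀ w ∈ T, ¬ wSat M w a
  | T, .or f g => ∃ T1 T2, T1 ∪ T2 = T ∧ TSat M T1 f ∧ TSat M T2 g
  | T, .and f g => TSat M T f ∧ TSat M T g
  | T, .dia f => ∃ S, succTeam M T S ∧ TSat M S f
  | T, .box f => TSat M (img M T) f

/-- embedding of classical formulas into ML(⊆) -/
def toInc : MF → IncForm
  | .prop p => .prop p
  | .bot => .bot
  | .neg a => .neg a
  | .or a b => .or (toInc a) (toInc b)
  | .and a b => .and (toInc a) (toInc b)
  | .dia a => .dia (toInc a)
  | .box a => .box (toInc a)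

/-- translate a Boolean constant to ⊤ or ⊥ -/
def ofBool : Bool → MF := fun x => if x then MF.top else MF.bot

/-- α^⊤ = α, α^⊥ = ¬α -/
def signed : Bool → MF → MF := fun x a => if x then a else a.neg

/-- a^x = α₁^{x₁} ∧ ... ∧ αₙ^{xₙ} -/
def conjSigned (xs : List Bool) (as : List MF) : MF :=
  (List.zipWith signed xs as).foldr MF.and MF.top


lemma wSat_top {W : Type} (M : KModel W) (w : W) : wSat M w MF.top := by
  simp [MF.top, wSat]

lemma wSat_ofBool {W : Type} (M : KModel W) (w : W) (x : Bool) :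
    wSat M w (ofBool x) ↔ x = true := by
  cases x <;> simp [ofBool, wSat, MF.top]

lemma flat {W : Type} (M : KModel W) (a : MF) :
    ∀ T : Set W, TSat M T (toInc a) ↔ ∀ w ∈ T, wSat M w a := by
  induction a with
  | prop p => intro T; exact ⟨fun h w hw => h hw, fun h w hw => h w hw⟩
  | bot => intro T; simp [toInc, TSat, wSat, Set.eq_empty_iff_forall_notMem]
  | neg a => intro T; simp [toInc, TSat, wSat]
  | or a b iha ihb =>
      intro T
      constructor
      · rintro ⟨T1, T2, rfl, ha, hb⟩ w hw
        rcases hw with hw | hw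
        · exact Or.inl ((iha T1).1 ha w hw)
        · exact Or.inr ((ihb T2).1 hb w hw)
      · intro h
        refine ⟨{w ∈ T | wSat M w a}, {w ∈ T | wSat M w b}, ?_, ?_, ?_⟩
        · ext w
          constructor
          · rintro (⟨hw, _⟩ | ⟨hw, _⟩) <;> exact hw
          · intro hw
            rcases h w hw with h' | h'
            · exact Or.inl ⟨hw, h'⟩
            · exact Or.inr ⟨hw, h'⟩
        · exact (iha _).2 fun w hw => hw.2
        · exact (ihb _).2 fun w hw => hw.2
  | and a b iha ihb =>
      intro T
      constructor
      · rintro ⟨ha, hb⟩ w hw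
        exact ⟨(iha T).1 ha w hw, (ihb T).1 hb w hw⟩
      · intro h
        exact ⟨(iha T).2 fun w hw => (h w hw).1, (ihb T).2 fun w hw => (h w hw).2⟩
  | dia a ih =>
      intro T
      constructor
      · rintro ⟨S, hS, hSa⟩ w hw
        obtain ⟨v, hv, hR⟩ := hS.2 w hw
        exact ⟨v, hR, (ih S).1 hSa v hv⟩
      · intro h
        refine ⟨{v | ∃ w ∈ T, M.R w v ∧ wSat M v a}, ⟨?_, ?_⟩, ?_⟩
        · rintro v ⟨w, hw, hR, _⟩
          exact ⟨w, hw, hR⟩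
        · intro w hw
          obtain ⟨v, hR, hva⟩ := h w hw
          exact ⟨v, ⟨w, hw, hR, hva⟩, hR⟩
        · exact (ih _).2 fun v hv => hv.choose_spec.2.2
  | box a ih =>
      intro T
      constructor
      · intro h w hw v hR
        exact (ih _).1 h v ⟨w, hw, hR⟩
      · intro h
        refine (ih _).2 ?_
        rintro v ⟨w, hw, hR⟩
        exact h w hw v hR

def mtch {W : Type} (M : KModel W) (v : W) (xs : List Bool) (as : List MF) : Prop :=
  ∀ i (h1 : i < xs.length) (h2 : i < as.length),
    (xs.get ⟨i, h1⟩ = true ↔ wSat M v (as.get ⟨i, h2⟩))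

lemma wSat_conjSigned {W : Type} (M : KModel W) (w : W) :
    ∀ (xs : List Bool) (as : List MF),
      wSat M w (conjSigned xs as) ↔ mtch M w xs as
  | [], as => by
      simp only [mtch, conjSigned, List.zipWith_nil_left, List.foldr_nil]
      exact ⟨fun _ i h1 h2 => absurd h1 (by simp), fun _ => wSat_top M w⟩
  | x :: xs, [] => by
      simp only [mtch, conjSigned, List.zipWith_nil_right, List.foldr_nil]
      exact ⟨fun _ i h1 h2 => absurd h2 (by simp), fun _ => wSat_top M w⟩
  | x :: xs, a :: as => by
      have ih := wSat_conjSigned M w xs as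
      have hsig : wSat M w (signed x a) ↔ (x = true ↔ wSat M w a) := by
        cases x <;> simp [signed, wSat]
      have hand : wSat M w (conjSigned (x :: xs) (a :: as)) ↔
          wSat M w (signed x a) ∧ wSat M w (conjSigned xs as) := Iff.rfl
      rw [hand, hsig, ih]
      constructor
      · rintro ⟨h0, h⟩ i hi1 hi2
        cases i with
        | zero => simpa using h0
        | succ i => simpa using h i (by simpa using hi1) (by simpa using hi2)
      · intro h
        refine ⟨by simpa using h 0 (by simp) (by simp), fun i hi1 hi2 => ?_⟩
        simpa using h (i + 1) (by simpa using hi1) (by simpa using hi2)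

lemma tsat_incl {W : Type} (M : KModel W) (T : Set W) (zs : List Bool) (cs : List MF) :
    TSat M T (.incl (zs.map ofBool) cs) ↔ ∀ w ∈ T, ∃ v ∈ T, mtch M v zs cs := by
  constructor
  · intro h w hw
    obtain ⟨v, hv, hvv⟩ := h w hw
    refine ⟨v, hv, fun i hi1 hi2 => ?_⟩
    have := hvv i (by simpa using hi1) hi2
    simpa [List.get_eq_getElem, List.getElem_map, wSat_ofBool] using this
  · intro h w hw
    obtain ⟨v, hv, hvv⟩ := h w hw
    refine ⟨v, hv, fun i hi1 hi2 => ?_⟩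
    have := hvv i (by simpa using hi1) hi2
    simpa [List.get_eq_getElem, List.getElem_map, wSat_ofBool] using this

lemma mtch_append {W : Type} (M : KModel W) (v : W) (xs ys : List Bool) (as bs : List MF)
    (hlen : xs.length = as.length) :
    mtch M v (xs ++ ys) (as ++ bs) ↔ mtch M v xs as ∧ mtch M v ys bs := by
  simp only [mtch, List.get_eq_getElem, List.length_append, hlen]
  constructor
  · intro h
    constructor
    · intro i hi1 hi2
      have := h i (by omega) (by omega)
      rwa [List.getElem_append_left (by omega), List.getElem_append_left (by omega)] at this
    · intro i hi1 hi2
      have := h (as.length + i) (by omega) (by omega)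
      rw [List.getElem_append_right (by omega), List.getElem_append_right (by omega)] at this
      simpa only [show as.length + i - xs.length = i from by omega,
        Nat.add_sub_cancel_left] using this
  · rintro ⟨hx, hy⟩ i hi1 hi2
    rcases lt_or_ge i as.length with hi | hi
    · rw [List.getElem_append_left (by omega), List.getElem_append_left (by omega)]
      exact hx i (by omega) (by omega)
    · rw [List.getElem_append_right (by omega), List.getElem_append_right (by omega)]
      simpa only [show i - xs.length = i - as.length from by omega] using
        hy (i - as.length) (by omega) (by omega)

theorem stmt7 {W : Type} (M : KModel W) (T : Set W)
    (xs ys : List Bool) (as bs : List MF)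
    (h1 : xs.length = as.length) (h2 : ys.length = bs.length) :
    TSat M T (.incl ((xs ++ ys).map ofBool) (as ++ bs)) ↔
      TSat M T (.and (.incl (xs.map ofBool) as)
        (.or (.and (.incl (ys.map ofBool) bs) (toInc (conjSigned xs as)))
             (.neg (conjSigned xs as)))) := by
  have lhs : TSat M T (.incl ((xs ++ ys).map ofBool) (as ++ bs)) ↔
      ∀ w ∈ T, ∃ v ∈ T, mtch M v xs as ∧ mtch M v ys bs := by
    rw [tsat_incl]
    exact forall₂_congr fun w _ => exists_congr fun v =>
      and_congr_right fun _ => mtch_append M v xs ys as bs h1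
  have rhs : TSat M T (.and (.incl (xs.map ofBool) as)
        (.or (.and (.incl (ys.map ofBool) bs) (toInc (conjSigned xs as)))
             (.neg (conjSigned xs as)))) ↔
      (∀ w ∈ T, ∃ v ∈ T, mtch M v xs as) ∧
      ∃ T1 T2 : Set W, T1 ∪ T2 = T ∧
        ((∀ w ∈ T1, ∃ v ∈ T1, mtch M v ys bs) ∧ ∀ w ∈ T1, mtch M w xs as) ∧
        (∀ w ∈ T2, ¬ mtch M w xs as) := by
    show (TSat M T (.incl (xs.map ofBool) as) ∧ _) ↔ _
    rw [tsat_incl]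
    apply and_congr_right
    intro _
    show (∃ T1 T2 : Set W, T1 ∪ T2 = T ∧
        (TSat M T1 (.incl (ys.map ofBool) bs) ∧ TSat M T1 (toInc (conjSigned xs as))) ∧
        TSat M T2 (.neg (conjSigned xs as))) ↔ _
    apply exists_congr; intro T1
    apply exists_congr; intro T2
    apply and_congr_right; intro _
    apply and_congr
    · rw [tsat_incl, flat]
      apply and_congr_right
      intro _
      exact forall₂_congr fun w _ => wSat_conjSigned M w xs as
    · show (∀ w ∈ T2, ¬ wSat M w (conjSigned xs as)) ↔ _
      exact forall₂_congr fun w _ => not_congr (wSat_conjSigned M w xs as)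
  rw [lhs, rhs]
  constructor
  · intro h
    constructor
    · intro w hw
      obtain ⟨v, hv, hva, _⟩ := h w hw
      exact ⟨v, hv, hva⟩
    · refine ⟨{w ∈ T | mtch M w xs as}, {w ∈ T | ¬ mtch M w xs as}, ?_, ⟨?_, ?_⟩, ?_⟩
      · ext w
        constructor
        · rintro (⟨hw, _⟩ | ⟨hw, _⟩) <;> exact hw
        · intro hw
          by_cases hm : mtch M w xs as
          · exact Or.inl ⟨hw, hm⟩
          · exact Or.inr ⟨hw, hm⟩
      · rintro w ⟨hw, _⟩
        obtain ⟨v, hv, hva, hvb⟩ := h w hw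
        exact ⟨v, ⟨hv, hva⟩, hvb⟩
      · exact fun w hw => hw.2
      · exact fun w hw => hw.2
  · rintro ⟨hA, T1, T2, hUnion, ⟨hB1, hB2⟩, hC⟩ w hw
    obtain ⟨v, hv, hva⟩ := hA w hw
    have hv1 : v ∈ T1 := by
      have : v ∈ T1 ∪ T2 := hUnion ▸ hv
      rcases this with h' | h'
      · exact h'
      · exact absurd hva (hC v h')
    obtain ⟨u, hu, hub⟩ := hB1 v hv1
    refine ⟨u, ?_, hB2 u hu, hub⟩
    have : u ∈ T1 ∪ T2 := Or.inl hu
    rw [hUnion] at this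
    exact this
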